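/- Let (G, k) be an instance of l-ECOC and (I, J, R) an ECOC crown decomposition of G. Then G has an l-ECOC solution of size at most k if and only if G − (I ∪ J) has an l-ECOC solution of size at most k − |J|. -/

import Mathlib

open SimpleGraph

variable {V : Type*}

/-- Every connected component of `G.induce X` has exactly `l` vertices. -/
def AllCompsSize (G : SimpleGraph V) (X : Set V) (l : ℕ) : Prop :=
  ∀ c : (G.induce X).ConnectedComponent, Nat.card c.supp = l

/-- `S` is an `l`-ECOC solution: every component of `G - S` has exactly `l` vertices. -/
def IsECOCSol (G : SimpleGraph V) (l : ℕ) (S : Set V) : Prop :=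
  AllCompsSize G Sᶜ l

/-- The (open) neighborhood of a set `X`. -/
def nbhd (G : SimpleGraph V) (X : Set V) : Set V :=
  {v | v ∉ X ∧ ∃ u ∈ X, G.Adj u v}

/-- ECOC crown decomposition. -/
def IsECOCCrown (G : SimpleGraph V) (l : ℕ) (I J R : Set V) : Prop :=
  (I ∪ J ∪ R = Set.univ) ∧ Disjoint I J ∧ Disjoint I R ∧ Disjoint J R ∧
  AllCompsSize G I l ∧
  (∀ u ∈ I, ∀ v ∈ R, ¬ G.Adj u v) ∧
  ∃ M : J → (G.induce I).ConnectedComponent, Function.Injective M ∧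
    ∀ x : J, ∃ u ∈ (M x).supp, G.Adj (u : V) (x : V)

/-- Strict ECOC crown decomposition. -/
def IsStrictECOCCrown (G : SimpleGraph V) (l : ℕ) (I J R : Set V) : Prop :=
  IsECOCCrown G l I J R ∧ I.Nonempty ∧
  Nat.card J + 1 ≤ Nat.card ((G.induce I).ConnectedComponent)

/-- `u` and `v` lie in `X` and in the same connected component of `G.induce X`. -/
def ReachIn (G : SimpleGraph V) (X : Set V) (u v : V) : Prop :=
  ∃ (hu : u ∈ X) (hv : v ∈ X), (G.induce X).Reachable ⟨u, hu⟩ ⟨v, hv⟩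

/-- Feasibility for the LP relaxation WECOC-LP. -/
def LPFeasible (G : SimpleGraph V) (l : ℕ) (x : V → ℝ) : Prop :=
  (∀ v, 0 ≤ x v ∧ x v ≤ 1) ∧
  ∀ C : Finset V, (G.induce (C : Set V)).Connected → C.card = l + 1 →
    1 ≤ ∑ v ∈ C, x v

/-- Alternating path w.r.t. a subgraph `M`: a path whose edges at even positions
are outside `M` and at odd positions are inside `M`. -/
def AltPath (G : SimpleGraph V) (M : G.Subgraph) {u v : V} (p : G.Walk u v) : Prop :=
  p.IsPath ∧ ∀ i : Fin p.edges.length, (p.edges.get i ∈ M.edgeSet ↔ Odd i.val)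


namespace ECOCAux

lemma reachIn_refl (G : SimpleGraph V) {X : Set V} {v : V} (hv : v ∈ X) :
    ReachIn G X v v := ⟨hv, hv, Reachable.refl _⟩

lemma reachIn_symm {G : SimpleGraph V} {X : Set V} {u v : V}
    (h : ReachIn G X u v) : ReachIn G X v u := by
  obtain ⟨hu, hv, h⟩ := h; exact ⟨hv, hu, h.symm⟩

lemma reachIn_trans {G : SimpleGraph V} {X : Set V} {u v w : V}
    (h1 : ReachIn G X u v) (h2 : ReachIn G X v w) : ReachIn G X u w := by
  obtain ⟨hu, hv, h1⟩ := h1; obtain ⟨hv', hw, h2⟩ := h2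
  exact ⟨hu, hw, h1.trans h2⟩

lemma reachIn_of_adj {G : SimpleGraph V} {X : Set V} {u v : V} (hu : u ∈ X) (hv : v ∈ X)
    (h : G.Adj u v) : ReachIn G X u v :=
  ⟨hu, hv, Adj.reachable (by simpa using h)⟩

/-- Restriction lemma: if `A` is closed under adjacency within `X`, reachability
from a vertex of `A` stays in `A`. -/
lemma reach_restrict {G : SimpleGraph V} {A X : Set V}
    (hcl : ∀ a ∈ A, ∀ b ∈ X, G.Adj a b → b ∈ A) {u v : V}
    (huA : u ∈ A) (h : ReachIn G X u v) : ReachIn G A u v := by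
  have key : ∀ (x y : ↥X), (G.induce X).Walk x y → x.val ∈ A → ReachIn G A x.val y.val := by
    intro x y p
    induction p with
    | nil => exact fun hx => reachIn_refl G hx
    | @cons x y z hadj p ih =>
        intro hx
        have hxy : G.Adj x.val y.val := hadj
        have hyA : y.val ∈ A := hcl _ hx _ y.2 hxy
        exact reachIn_trans (reachIn_of_adj hx hyA hxy) (ih hyA)
  obtain ⟨hu, hv, h⟩ := h
  obtain ⟨p⟩ := h
  exact key _ _ p huA

lemma reach_mono {G : SimpleGraph V} {A X : Set V} (hAX : A ⊆ X) {u v : V}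
    (h : ReachIn G A u v) : ReachIn G X u v := by
  obtain ⟨hu, hv, h⟩ := h
  refine ⟨hAX hu, hAX hv, ?_⟩
  have := h.map (G.induceHomOfLE hAX).toHom
  exact this

/-- Localization: reachability in `X` from a vertex of a suitably closed set `P`
stays in `X ∩ P`. -/
lemma reach_localize {G : SimpleGraph V} {X P : Set V} {v u : V}
    (hvX : v ∈ X) (hvP : v ∈ P)
    (hcl : ∀ a, a ∈ P → ReachIn G X a v → ∀ b ∈ X, G.Adj a b → b ∈ P)
    (h : ReachIn G X u v) : u ∈ P ∧ ReachIn G (X ∩ P) u v := by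
  have h' : ReachIn G {w | w ∈ X ∧ w ∈ P ∧ ReachIn G X w v} v u := by
    refine reach_restrict ?_ ⟨hvX, hvP, reachIn_refl G hvX⟩ (reachIn_symm h)
    rintro a ⟨haX, haP, har⟩ b hbX hadj
    exact ⟨hbX, hcl a haP har b hbX hadj,
      reachIn_trans (reachIn_of_adj hbX haX hadj.symm) har⟩
  have huA : u ∈ P := by
    obtain ⟨-, hu2, -⟩ := h'
    exact hu2.2.1
  have hsub : {w | w ∈ X ∧ w ∈ P ∧ ReachIn G X w v} ⊆ X ∩ P := by
    intro w hw; exact ⟨hw.1, hw.2.1⟩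
  exact ⟨huA, reachIn_symm (reach_mono hsub h')⟩

lemma card_supp_eq_reachSet (G : SimpleGraph V) (X : Set V) {v : V} (hv : v ∈ X) :
    Nat.card ((G.induce X).connectedComponentMk ⟨v, hv⟩).supp
      = Nat.card {u : V | ReachIn G X u v} := by
  apply Nat.card_congr
  refine Equiv.ofBijective
    (fun w => ⟨w.val.val, w.val.2, hv, ConnectedComponent.eq.mp w.2⟩) ⟨?_, ?_⟩
  · intro a b hab
    have : a.val.val = b.val.val := Subtype.mk_eq_mk.mp hab
    apply Subtype.ext; apply Subtype.ext; exact this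
  · rintro ⟨u, hu, hv', r⟩
    refine ⟨⟨⟨u, hu⟩, ?_⟩, rfl⟩
    rw [ConnectedComponent.mem_supp_iff, ConnectedComponent.eq]
    exact r

lemma allCompsSize_iff (G : SimpleGraph V) (X : Set V) (l : ℕ) :
    AllCompsSize G X l ↔ ∀ v, ∀ hv : v ∈ X, Nat.card {u : V | ReachIn G X u v} = l := by
  constructor
  · intro h v hv
    rw [← card_supp_eq_reachSet G X hv]; exact h _
  · intro h c
    refine ConnectedComponent.ind (fun w => ?_) c
    have h2 := card_supp_eq_reachSet (v := w.val) G X w.2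
    have : (⟨w.val, w.2⟩ : ↥X) = w := rfl
    rw [this] at h2
    rw [h2]
    exact h _ w.2

lemma card_eq_mul_of_fibers {α β : Type*} [Finite α] [Finite β] (f : α → β) (l : ℕ)
    (h : ∀ b, Nat.card {a // f a = b} = l) : Nat.card α = l * Nat.card β := by
  classical
  cases nonempty_fintype α
  cases nonempty_fintype β
  rw [Nat.card_eq_fintype_card, Nat.card_eq_fintype_card,
    Fintype.card_congr (Equiv.sigmaFiberEquiv f).symm, Fintype.card_sigma]
  have hb : ∀ b, Fintype.card {a // f a = b} = l := fun b => by
    rw [← Nat.card_eq_fintype_card]; exact h b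
  simp [hb, mul_comm]

lemma allCompsSize_iso {α β : Type*} {H1 : SimpleGraph α} {H2 : SimpleGraph β}
    (e : H1 ≃g H2) (l : ℕ) :
    (∀ c : H1.ConnectedComponent, Nat.card c.supp = l) ↔
      (∀ c : H2.ConnectedComponent, Nat.card c.supp = l) := by
  constructor
  · intro h c
    have := h (e.connectedComponentEquiv.symm c)
    rwa [Nat.card_congr (ConnectedComponent.isoEquivSupp e _),
      Equiv.apply_symm_apply] at this
  · intro h c
    rw [Nat.card_congr (ConnectedComponent.isoEquivSupp e c)]
    exact h _

/-- iso between double induce and single induce. -/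
noncomputable def induceInduceIso (G : SimpleGraph V) (X : Set V) (Y : Set X) :
    (G.induce X).induce Y ≃g G.induce (Subtype.val '' Y) where
  toEquiv := Equiv.Set.image Subtype.val Y Subtype.val_injective
  map_rel_iff' := by
    intro a b
    simp [Equiv.Set.image, Equiv.Set.imageOfInjOn]

lemma allCompsSize_induce (G : SimpleGraph V) (X : Set V) (Y : Set X) (l : ℕ) :
    AllCompsSize (G.induce X) Y l ↔ AllCompsSize G (Subtype.val '' Y) l :=
  allCompsSize_iso (induceInduceIso G X Y) l

/-- Counting a union of components selected by a predicate. -/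
lemma card_part_eq_mul [Fintype V] (G : SimpleGraph V) (X T : Set V) (l : ℕ)
    (hall : ∀ c : (G.induce X).ConnectedComponent, Nat.card c.supp = l)
    (P : (G.induce X).ConnectedComponent → Prop)
    (hTX : T ⊆ X)
    (h1 : ∀ v, ∀ hv : v ∈ T, P ((G.induce X).connectedComponentMk ⟨v, hTX hv⟩))
    (h2 : ∀ c, P c → ∀ w : ↥X, (G.induce X).connectedComponentMk w = c → w.val ∈ T) :
    T.ncard = l * Nat.card {c : (G.induce X).ConnectedComponent // P c} := by
  classical
  rw [← Nat.card_coe_set_eq]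
  apply card_eq_mul_of_fibers
    (fun t : ↥T => (⟨(G.induce X).connectedComponentMk ⟨t.val, hTX t.2⟩, h1 t.val t.2⟩ :
      {c // P c}))
  rintro ⟨c, hc⟩
  rw [← hall c]
  apply Nat.card_congr
  refine Equiv.ofBijective (fun a => ⟨⟨a.val.val, hTX a.val.2⟩, ?_⟩) ⟨?_, ?_⟩
  · have := congrArg Subtype.val a.2
    simpa [ConnectedComponent.mem_supp_iff] using this
  · intro a b hab
    have : a.val.val = b.val.val := Subtype.mk_eq_mk.mp (Subtype.mk_eq_mk.mp hab)
    apply Subtype.ext; apply Subtype.ext; exact this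
  · rintro ⟨w, hw⟩
    rw [ConnectedComponent.mem_supp_iff] at hw
    refine ⟨⟨⟨w.val, h2 c hc w hw⟩, ?_⟩, ?_⟩
    · apply Subtype.ext
      simpa using hw
    · apply Subtype.ext; apply Subtype.ext; rfl

lemma forward_main [Fintype V] (G : SimpleGraph V) (l : ℕ)
    (I J Rc : Set V) (huniv : I ∪ J ∪ Rc = Set.univ) (hIJ : Disjoint I J)
    (hIR : Disjoint I Rc) (hJR : Disjoint J Rc)
    (hcompI : AllCompsSize G I l)
    (hnoIR : ∀ u ∈ I, ∀ v ∈ Rc, ¬ G.Adj u v)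
    (M : J → (G.induce I).ConnectedComponent) (hMinj : Function.Injective M)
    (hMadj : ∀ x : J, ∃ u ∈ (M x).supp, G.Adj (u : V) (x : V))
    (S : Set V) (hS : AllCompsSize G Sᶜ l) :
    ∃ T : Set V, T ⊆ Rc ∧ AllCompsSize G (Rc \ T) l ∧ T.ncard + J.ncard ≤ S.ncard := by
  classical
  set X : Set V := Sᶜ with hXdef
  have htri : ∀ v : V, v ∈ I ∨ v ∈ J ∨ v ∈ Rc := by
    intro v
    have hv : v ∈ I ∪ J ∪ Rc := huniv ▸ Set.mem_univ v
    rcases hv with (h | h) | h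
    · exact Or.inl h
    · exact Or.inr (Or.inl h)
    · exact Or.inr (Or.inr h)
  have hl1 : ∀ v, ∀ _ : v ∈ X, Nat.card {u : V | ReachIn G X u v} = l :=
    (allCompsSize_iff G X l).mp hS
  have hlI : ∀ v, ∀ _ : v ∈ I, Nat.card {u : V | ReachIn G I u v} = l :=
    (allCompsSize_iff G I l).mp hcompI
  have hstep : ∀ {a v b : V}, ReachIn G X a v → b ∈ X → G.Adj a b → ReachIn G X b v :=
    fun h hb hadj => reachIn_trans (reachIn_of_adj hb h.choose hadj.symm) h
  have hF1 : ∀ v, v ∈ X → v ∈ I → (¬ ∃ x ∈ J, ReachIn G X x v) →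
      ∀ u, ReachIn G X u v → u ∈ I ∧ ReachIn G I u v := by
    intro v hvX hvI hnoJ u hu
    have hloc := reach_localize (P := I) hvX hvI ?_ hu
    · exact ⟨hloc.1, reach_mono Set.inter_subset_right hloc.2⟩
    · intro a haI har b hbX hadj
      rcases htri b with hbI | hbJ | hbR
      · exact hbI
      · exact absurd ⟨b, hbJ, hstep har hbX hadj⟩ hnoJ
      · exact absurd hadj (hnoIR a haI b hbR)
  have hFA : ∀ v, v ∈ X → v ∈ I → (¬ ∃ x ∈ J, ReachIn G X x v) →
      {u : V | ReachIn G X u v} = {u : V | ReachIn G I u v} := by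
    intro v hvX hvI hnoJ
    have hsub : {u : V | ReachIn G X u v} ⊆ {u : V | ReachIn G I u v} :=
      fun u hu => (hF1 v hvX hvI hnoJ u hu).2
    refine Set.eq_of_subset_of_ncard_le hsub ?_ (Set.toFinite _)
    rw [← Nat.card_coe_set_eq, ← Nat.card_coe_set_eq, hl1 v hvX, hlI v hvI]
  set D : Set V := {v | v ∈ X ∧ v ∈ Rc ∧ ∃ x ∈ J, ReachIn G X x v} with hDdef
  set Q : Set V := {v | v ∈ X ∧ ∃ x ∈ J, ReachIn G X x v} with hQdef
  set Ap : Set V := {v | v ∈ X ∧ v ∈ I ∧ ¬ ∃ x ∈ J, ReachIn G X x v} with hApdef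
  refine ⟨(S ∩ Rc) ∪ D, ?_, ?_, ?_⟩
  · rintro v (⟨-, hv⟩ | hv)
    · exact hv
    · exact hv.2.1
  · -- solution property on Rc \ T
    set Z : Set V := {v | v ∈ X ∧ v ∈ Rc ∧ v ∉ D} with hZdef
    have hZX : Z ⊆ X := fun v hv => hv.1
    have hZeq : Rc \ ((S ∩ Rc) ∪ D) = Z := by
      ext v
      constructor
      · rintro ⟨hvR, hvn⟩
        have hvS : v ∉ S := fun hvS => hvn (Or.inl ⟨hvS, hvR⟩)
        exact ⟨hvS, hvR, fun hD => hvn (Or.inr hD)⟩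
      · rintro ⟨hvX, hvR, hvD⟩
        exact ⟨hvR, fun h => h.elim (fun h' => hvX h'.1) hvD⟩
    rw [hZeq]
    rw [allCompsSize_iff]
    intro v hv
    have hclaim : {u : V | ReachIn G Z u v} = {u : V | ReachIn G X u v} := by
      ext u
      constructor
      · exact fun h => reach_mono hZX h
      · intro hu
        have hloc := reach_localize (P := Z) hv.1 hv ?_ hu
        · exact reach_mono Set.inter_subset_right hloc.2
        · intro a haZ har b hbX hadj
          rcases htri b with hbI | hbJ | hbR
          · exact absurd hadj.symm (hnoIR b hbI a haZ.2.1)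
          · exact absurd ⟨hv.1, hv.2.1, b, hbJ, hstep har hbX hadj⟩ hv.2.2
          · refine ⟨hbX, hbR, fun hbD => ?_⟩
            obtain ⟨-, -, x, hxJ, hxr⟩ := hbD
            exact hv.2.2 ⟨hv.1, hv.2.1, x, hxJ, reachIn_trans hxr (hstep har hbX hadj)⟩
    rw [hclaim]
    exact hl1 v hv.1
  · -- cardinality bound
    set PB : (G.induce X).ConnectedComponent → Prop :=
      fun c => ∃ w : ↥X, (G.induce X).connectedComponentMk w = c ∧ w.val ∈ J with hPBdef
    set PAp : (G.induce X).ConnectedComponent → Prop :=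
      fun c => (∀ w : ↥X, (G.induce X).connectedComponentMk w = c → w.val ∈ I) ∧ ¬ PB c
      with hPApdef
    have hQX : Q ⊆ X := fun v hv => hv.1
    have hApX : Ap ⊆ X := fun v hv => hv.1
    have hQcard : Q.ncard = l * Nat.card {c // PB c} := by
      refine card_part_eq_mul G X Q l hS PB hQX ?_ ?_
      · intro v hv
        obtain ⟨x, hxJ, hxr⟩ := hv.2
        exact ⟨⟨x, hxr.choose⟩,
          ConnectedComponent.eq.mpr hxr.choose_spec.choose_spec, hxJ⟩
      · rintro c ⟨w', hw', hw'J⟩ w hw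
        refine ⟨w.2, w'.val, hw'J, ?_⟩
        exact ⟨w'.2, w.2, ConnectedComponent.eq.mp (hw'.trans hw.symm)⟩
    have hApcard : Ap.ncard = l * Nat.card {c // PAp c} := by
      refine card_part_eq_mul G X Ap l hS PAp hApX ?_ ?_
      · intro v hv
        constructor
        · intro w hw
          have hr : ReachIn G X w.val v :=
            ⟨w.2, hv.1, ConnectedComponent.eq.mp hw⟩
          exact (hF1 v hv.1 hv.2.1 hv.2.2 w.val hr).1
        · rintro ⟨w, hw, hwJ⟩
          have hr : ReachIn G X w.val v :=
            ⟨w.2, hv.1, ConnectedComponent.eq.mp hw⟩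
          exact hv.2.2 ⟨w.val, hwJ, hr⟩
      · rintro c ⟨hPA, hnB⟩ w hw
        refine ⟨w.2, hPA w hw, ?_⟩
        rintro ⟨x, hxJ, hxr⟩
        refine hnB ⟨⟨x, hxr.choose⟩, ?_, hxJ⟩
        exact (ConnectedComponent.eq.mpr hxr.choose_spec.choose_spec).trans hw
    have hIcard : I.ncard = l * Nat.card ((G.induce I).ConnectedComponent) := by
      have h := card_part_eq_mul G I I l hcompI (fun _ => True) (subset_refl I)
        (fun _ _ => trivial) (fun c _ w _ => w.2)
      rw [h]
      congr 1
      exact Nat.card_congr (Equiv.subtypeUnivEquiv (fun _ => trivial))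
    have hrep : ∀ c : (G.induce X).ConnectedComponent,
        ∃ w : ↥X, (G.induce X).connectedComponentMk w = c :=
      fun c => ConnectedComponent.ind (fun w => ⟨w, rfl⟩) c
    have haux_noJ : ∀ c, PAp c → ∀ w : ↥X, (G.induce X).connectedComponentMk w = c →
        ¬ ∃ x ∈ J, ReachIn G X x w.val := by
      rintro c hc w hw ⟨x, hxJ, hxr⟩
      refine hc.2 ⟨⟨x, hxr.choose⟩, ?_, hxJ⟩
      exact (ConnectedComponent.eq.mpr hxr.choose_spec.choose_spec).trans hw
    have hcross : ∀ c, PAp c → ∀ w : ↥X, (G.induce X).connectedComponentMk w = c →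
        ∀ hwI : w.val ∈ I, ∀ x : ↥J, x.val ∈ X →
        (G.induce I).connectedComponentMk ⟨w.val, hwI⟩ = M x → False := by
      intro c hc w hw hwI x hxX heq
      obtain ⟨u, husupp, hadj⟩ := hMadj x
      have hmk : (G.induce I).connectedComponentMk u
          = (G.induce I).connectedComponentMk ⟨w.val, hwI⟩ :=
        (ConnectedComponent.mem_supp_iff _ _).mp husupp |>.trans heq.symm
      have hru : ReachIn G I u.val w.val := ⟨u.2, hwI, ConnectedComponent.eq.mp hmk⟩
      have hFAeq := hFA w.val w.2 hwI (haux_noJ c hc w hw)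
      have huX : ReachIn G X u.val w.val := by
        have : u.val ∈ {u : V | ReachIn G I u w.val} := hru
        rw [← hFAeq] at this
        exact this
      have hr2 : ReachIn G X x.val w.val := hstep huX hxX hadj
      exact haux_noJ c hc w hw ⟨x.val, x.2, hr2⟩
    have hABle : Nat.card {c // PAp c} + Nat.card {c // PB c}
        ≤ Nat.card ((G.induce I).ConnectedComponent) := by
      rw [← Nat.card_sum]
      have hrepspec : ∀ c, (G.induce X).connectedComponentMk (hrep c).choose = c :=
        fun c => (hrep c).choose_spec
      apply Nat.card_le_card_of_injective (Sum.elim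
        (fun a : {c // PAp c} => (G.induce I).connectedComponentMk
          ⟨(hrep a.val).choose.val, a.2.1 _ (hrepspec a.val)⟩)
        (fun b : {c // PB c} => M ⟨(b.2.choose).val, b.2.choose_spec.2⟩))
      rintro (⟨c1, h1⟩ | ⟨c1, h1⟩) (⟨c2, h2⟩ | ⟨c2, h2⟩) heq <;>
        simp only [Sum.elim_inl, Sum.elim_inr] at heq
      · -- inl inl
        have hrI : ReachIn G I (hrep c1).choose.val (hrep c2).choose.val :=
          ⟨h1.1 _ (hrepspec c1), h2.1 _ (hrepspec c2), ConnectedComponent.eq.mp heq⟩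
        have hFAeq := hFA (hrep c2).choose.val (hrep c2).choose.2
          (h2.1 _ (hrepspec c2)) (haux_noJ c2 h2 _ (hrepspec c2))
        have hrX : ReachIn G X (hrep c1).choose.val (hrep c2).choose.val := by
          have : (hrep c1).choose.val ∈ {u : V | ReachIn G I u (hrep c2).choose.val} := hrI
          rw [← hFAeq] at this
          exact this
        have : c1 = c2 := by
          rw [← hrepspec c1, ← hrepspec c2]
          exact ConnectedComponent.eq.mpr hrX.choose_spec.choose_spec
        exact congrArg Sum.inl (Subtype.ext this)
      · exact (hcross c1 h1 _ (hrepspec c1) (h1.1 _ (hrepspec c1))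
          ⟨(h2.choose).val, h2.choose_spec.2⟩ (h2.choose).2 heq).elim
      · exact (hcross c2 h2 _ (hrepspec c2) (h2.1 _ (hrepspec c2))
          ⟨(h1.choose).val, h1.choose_spec.2⟩ (h1.choose).2 heq.symm).elim
      · have hx := hMinj heq
        have hv : (h1.choose).val = (h2.choose).val := Subtype.mk_eq_mk.mp hx
        have : c1 = c2 := by
          rw [← h1.choose_spec.1, ← h2.choose_spec.1]
          exact congrArg _ (Subtype.ext hv)
        exact congrArg Sum.inr (Subtype.ext this)
    have hQpart : Q.ncard = (Q ∩ I).ncard + ((J \ S).ncard + D.ncard) := by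
      have he : Q = (Q ∩ I) ∪ ((J \ S) ∪ D) := by
        ext v
        constructor
        · intro hv
          rcases htri v with hI | hJ | hR
          · exact Or.inl ⟨hv, hI⟩
          · exact Or.inr (Or.inl ⟨hJ, hv.1⟩)
          · exact Or.inr (Or.inr ⟨hv.1, hR, hv.2⟩)
        · rintro (⟨hv, -⟩ | ⟨hJ, hnS⟩ | hD)
          · exact hv
          · exact ⟨hnS, v, hJ, reachIn_refl G hnS⟩
          · exact ⟨hD.1, hD.2.2⟩
      have hd2 : Disjoint (J \ S) D := by
        rw [Set.disjoint_left]
        rintro a ⟨haJ, -⟩ haD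
        exact Set.disjoint_left.mp hJR haJ haD.2.1
      have hd1 : Disjoint (Q ∩ I) ((J \ S) ∪ D) := by
        rw [Set.disjoint_left]
        rintro a ⟨-, haI⟩ (haJ | haD)
        · exact Set.disjoint_left.mp hIJ haI haJ.1
        · exact Set.disjoint_left.mp hIR haI haD.2.1
      conv_lhs => rw [he]
      rw [Set.ncard_union_eq hd1 (Set.toFinite _) (Set.toFinite _),
        Set.ncard_union_eq hd2 (Set.toFinite _) (Set.toFinite _)]
    have hIpart : I.ncard = (S ∩ I).ncard + (Ap.ncard + (Q ∩ I).ncard) := by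
      have he : I = (S ∩ I) ∪ (Ap ∪ (Q ∩ I)) := by
        ext v
        constructor
        · intro hvI
          by_cases hvS : v ∈ S
          · exact Or.inl ⟨hvS, hvI⟩
          · by_cases hJr : ∃ x ∈ J, ReachIn G X x v
            · exact Or.inr (Or.inr ⟨⟨hvS, hJr⟩, hvI⟩)
            · exact Or.inr (Or.inl ⟨hvS, hvI, hJr⟩)
        · rintro (⟨-, hv⟩ | ⟨-, hv, -⟩ | ⟨-, hv⟩)
          · exact hv
          · exact hv
          · exact hv
      have hd2 : Disjoint Ap (Q ∩ I) := by
        rw [Set.disjoint_left]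
        rintro a ⟨-, -, hno⟩ ⟨⟨-, hex⟩, -⟩
        exact hno hex
      have hd1 : Disjoint (S ∩ I) (Ap ∪ (Q ∩ I)) := by
        rw [Set.disjoint_left]
        rintro a ⟨haS, -⟩ (ha | ha)
        · exact ha.1 haS
        · exact ha.1.1 haS
      conv_lhs => rw [he]
      rw [Set.ncard_union_eq hd1 (Set.toFinite _) (Set.toFinite _),
        Set.ncard_union_eq hd2 (Set.toFinite _) (Set.toFinite _)]
    have hJpart : J.ncard = (J \ S).ncard + (S ∩ J).ncard := by
      have he : J = (J \ S) ∪ (S ∩ J) := by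
        ext v
        constructor
        · intro hv
          by_cases h : v ∈ S
          · exact Or.inr ⟨h, hv⟩
          · exact Or.inl ⟨hv, h⟩
        · rintro (⟨h, -⟩ | ⟨-, h⟩) <;> exact h
      have hd : Disjoint (J \ S) (S ∩ J) := by
        rw [Set.disjoint_left]
        rintro a ⟨-, h⟩ ⟨h2, -⟩
        exact h h2
      conv_lhs => rw [he]
      rw [Set.ncard_union_eq hd (Set.toFinite _) (Set.toFinite _)]
    have hSpart : S.ncard = (S ∩ I).ncard + ((S ∩ J).ncard + (S ∩ Rc).ncard) := by
      have he : S = (S ∩ I) ∪ ((S ∩ J) ∪ (S ∩ Rc)) := by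
        ext v
        constructor
        · intro hv
          rcases htri v with h | h | h
          · exact Or.inl ⟨hv, h⟩
          · exact Or.inr (Or.inl ⟨hv, h⟩)
          · exact Or.inr (Or.inr ⟨hv, h⟩)
        · rintro (⟨h, -⟩ | ⟨h, -⟩ | ⟨h, -⟩) <;> exact h
      have hd2 : Disjoint (S ∩ J) (S ∩ Rc) := by
        rw [Set.disjoint_left]
        rintro a ⟨-, h⟩ ⟨-, h2⟩
        exact Set.disjoint_left.mp hJR h h2
      have hd1 : Disjoint (S ∩ I) ((S ∩ J) ∪ (S ∩ Rc)) := by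
        rw [Set.disjoint_left]
        rintro a ⟨-, haI⟩ (⟨-, h⟩ | ⟨-, h⟩)
        · exact Set.disjoint_left.mp hIJ haI h
        · exact Set.disjoint_left.mp hIR haI h
      conv_lhs => rw [he]
      rw [Set.ncard_union_eq hd1 (Set.toFinite _) (Set.toFinite _),
        Set.ncard_union_eq hd2 (Set.toFinite _) (Set.toFinite _)]
    have hTle : ((S ∩ Rc) ∪ D).ncard ≤ (S ∩ Rc).ncard + D.ncard :=
      Set.ncard_union_le _ _
    have hmul : l * Nat.card {c // PAp c} + l * Nat.card {c // PB c}
        ≤ l * Nat.card ((G.induce I).ConnectedComponent) := by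
      rw [← Nat.mul_add]
      exact Nat.mul_le_mul_left l hABle
    obtain ⟨a1, ha1⟩ : ∃ a, l * Nat.card {c // PAp c} = a := ⟨_, rfl⟩
    obtain ⟨a2, ha2⟩ : ∃ a, l * Nat.card {c // PB c} = a := ⟨_, rfl⟩
    obtain ⟨a3, ha3⟩ : ∃ a, l * Nat.card ((G.induce I).ConnectedComponent) = a := ⟨_, rfl⟩
    rw [ha1] at hApcard hmul
    rw [ha2] at hQcard hmul
    rw [ha3] at hIcard hmul
    omega

end ECOCAux

open ECOCAux

theorem stmt1 [Fintype V] (G : SimpleGraph V) (l k : ℕ) (hl : 1 ≤ l)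
    (I J R : Set V) (hcrown : IsECOCCrown G l I J R) :
    (∃ S : Set V, IsECOCSol G l S ∧ Nat.card S ≤ k) ↔
      (∃ S' : Set ((I ∪ J)ᶜ : Set V),
        IsECOCSol (G.induce ((I ∪ J)ᶜ : Set V)) l S' ∧
        Nat.card S' + Nat.card J ≤ k) := by
  classical
  obtain ⟨huniv, hIJ, hIR, hJR, hcompI, hnoIR, M, hMinj, hMadj⟩ := hcrown
  have hR : R = (I ∪ J)ᶜ := by
    ext v
    constructor
    · intro hv
      rintro (h | h)
      · exact Set.disjoint_left.mp hIR h hv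
      · exact Set.disjoint_left.mp hJR h hv
    · intro hv
      have h2 : v ∈ I ∪ J ∪ R := huniv ▸ Set.mem_univ v
      rcases h2 with (h | h) | h
      · exact absurd (Or.inl h) hv
      · exact absurd (Or.inr h) hv
      · exact h
  subst hR
  have htri : ∀ v : V, v ∈ I ∨ v ∈ J ∨ v ∈ (I ∪ J)ᶜ := by
    intro v
    by_cases h1 : v ∈ I
    · exact Or.inl h1
    by_cases h2 : v ∈ J
    · exact Or.inr (Or.inl h2)
    · exact Or.inr (Or.inr (fun h => h.elim h1 h2))
  have hJcard : Nat.card J = J.ncard := Nat.card_coe_set_eq J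
  constructor
  · rintro ⟨S, hSsol, hScard⟩
    obtain ⟨T, hTR, hTsol, hTcard⟩ := forward_main G l I J ((I ∪ J)ᶜ) huniv hIJ hIR hJR
      hcompI hnoIR M hMinj hMadj S hSsol
    refine ⟨{w : ((I ∪ J)ᶜ : Set V) | w.val ∈ T}, ?_, ?_⟩
    · unfold IsECOCSol
      rw [allCompsSize_induce]
      have himg : Subtype.val '' ({w : ((I ∪ J)ᶜ : Set V) | w.val ∈ T}ᶜ)
          = (I ∪ J)ᶜ \ T := by
        ext v
        constructor
        · rintro ⟨w, hw, rfl⟩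
          exact ⟨w.2, hw⟩
        · rintro ⟨hv, hvT⟩
          exact ⟨⟨v, hv⟩, hvT, rfl⟩
      rw [himg]
      exact hTsol
    · have hc : Nat.card {w : ((I ∪ J)ᶜ : Set V) | w.val ∈ T} = T.ncard := by
        rw [← Nat.card_coe_set_eq]
        apply Nat.card_congr
        exact ⟨fun w => ⟨w.val.val, w.2⟩, fun t => ⟨⟨t.val, hTR t.2⟩, t.2⟩,
          fun w => by apply Subtype.ext; apply Subtype.ext; rfl,
          fun t => by apply Subtype.ext; rfl⟩
      rw [hc, hJcard]
      have hs : Nat.card S = S.ncard := Nat.card_coe_set_eq S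
      omega
  · rintro ⟨S', hS'sol, hS'card⟩
    set T : Set V := Subtype.val '' S' with hTdef
    have hTR : T ⊆ (I ∪ J)ᶜ := by
      rintro v ⟨w, hw, rfl⟩
      exact w.2
    have hlI : ∀ v, ∀ _ : v ∈ I, Nat.card {u : V | ReachIn G I u v} = l :=
      (allCompsSize_iff G I l).mp hcompI
    have hZsol : AllCompsSize G ((I ∪ J)ᶜ \ T) l := by
      have h1 := hS'sol
      unfold IsECOCSol at h1
      rw [allCompsSize_induce] at h1
      have himg : Subtype.val '' (S'ᶜ) = (I ∪ J)ᶜ \ T := by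
        ext v
        constructor
        · rintro ⟨w, hw, rfl⟩
          refine ⟨w.2, fun hmem => ?_⟩
          obtain ⟨w', hw', hww⟩ := hmem
          have : w' = w := Subtype.ext hww
          exact hw (this ▸ hw')
        · rintro ⟨hv, hvT⟩
          exact ⟨⟨v, hv⟩, fun hmem => hvT ⟨⟨v, hv⟩, hmem, rfl⟩, rfl⟩
      rw [himg] at h1
      exact h1
    have hZl : ∀ v, ∀ _ : v ∈ (I ∪ J)ᶜ \ T,
        Nat.card {u : V | ReachIn G ((I ∪ J)ᶜ \ T) u v} = l :=
      (allCompsSize_iff G _ l).mp hZsol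
    refine ⟨J ∪ T, ?_, ?_⟩
    · unfold IsECOCSol
      rw [allCompsSize_iff]
      intro v hv
      have hvJ : v ∉ J := fun h => hv (Or.inl h)
      have hvT : v ∉ T := fun h => hv (Or.inr h)
      have hIX : I ⊆ (J ∪ T)ᶜ := by
        intro u hu h
        rcases h with h | h
        · exact Set.disjoint_left.mp hIJ hu h
        · exact hTR h (Or.inl hu)
      have hZbX : (I ∪ J)ᶜ \ T ⊆ (J ∪ T)ᶜ := by
        rintro u ⟨hu1, hu2⟩ (h | h)
        · exact hu1 (Or.inr h)
        · exact hu2 h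
      rcases htri v with hvI | hvJ' | hvR
      · -- v in I
        have hclaim : {u : V | ReachIn G ((J ∪ T)ᶜ) u v} = {u : V | ReachIn G I u v} := by
          ext u
          constructor
          · intro hu
            have hloc := reach_localize (P := I) hv hvI ?_ hu
            · exact reach_mono Set.inter_subset_right hloc.2
            · intro a haI har b hbX hadj
              rcases htri b with hbI | hbJ | hbR
              · exact hbI
              · exact absurd (Or.inl hbJ) hbX
              · exact absurd hadj (hnoIR a haI b hbR)
          · exact fun hu => reach_mono hIX hu
        rw [hclaim]
        exact hlI v hvI
      · exact absurd hvJ' hvJ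
      · -- v in (I ∪ J)ᶜ
        have hvZ : v ∈ (I ∪ J)ᶜ \ T := ⟨hvR, hvT⟩
        have hclaim : {u : V | ReachIn G ((J ∪ T)ᶜ) u v}
            = {u : V | ReachIn G ((I ∪ J)ᶜ \ T) u v} := by
          ext u
          constructor
          · intro hu
            have hloc := reach_localize (P := (I ∪ J)ᶜ \ T) hv hvZ ?_ hu
            · exact reach_mono Set.inter_subset_right hloc.2
            · intro a haZ har b hbX hadj
              rcases htri b with hbI | hbJ | hbR
              · exact absurd hadj.symm (hnoIR b hbI a haZ.1)
              · exact absurd (Or.inl hbJ) hbX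
              · exact ⟨hbR, fun h => hbX (Or.inr h)⟩
          · exact fun hu => reach_mono hZbX hu
        rw [hclaim]
        exact hZl v hvZ
    · have hdisj : Disjoint J T := by
        rw [Set.disjoint_left]
        intro a haJ haT
        exact hTR haT (Or.inr haJ)
      have h1 : Nat.card (J ∪ T : Set V) = J.ncard + T.ncard := by
        rw [Nat.card_coe_set_eq,
          Set.ncard_union_eq hdisj (Set.toFinite _) (Set.toFinite _)]
      have h2 : T.ncard = Nat.card S' := by
        rw [hTdef, Set.ncard_image_of_injective _ Subtype.val_injective,
          ← Nat.card_coe_set_eq]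
      rw [h1, h2]
      omega
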